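/- arXiv:2501.03710 — 2 statements merged into one kernel-verified Lean document; each statement's English description precedes it below -/
import Mathlib

section
/- Let G be a finite simple graph without isolated vertices with treewidth tw(G) ≤ k. Then the incidence graph of the CNF ψ(G) has treewidth at most 2k+3. -/
/-! ## Common definitions -/

/-- A (partial) assignment over variable type `V`. -/
abbrev Asg (V : Type*) := V → Option Bool

/-- The domain (set of variables) of an assignment. -/
def Asg.dom {V : Type*} (g : Asg V) : Set V := {x | g x ≠ none}

/-- Union of two assignments (the left one takes precedence where both are defined). -/
def Asg.union {V : Type*} (g h : Asg V) : Asg V := fun x => (g x).orElse (fun _ => h x)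

/-- A set of assignments is uniform with common domain `S`. -/
def UniformOn {V : Type*} (H : Set (Asg V)) (S : Set V) : Prop := ∀ g ∈ H, g.dom = S

/-- The product `H₁ × H₂` of two sets of assignments. -/
def AsgProd {V : Type*} (H₁ H₂ : Set (Asg V)) : Set (Asg V) := Set.image2 Asg.union H₁ H₂

/-- `H`, a uniform set of assignments with variable set `W`, is a rectangle that
breaks `Y ⊆ W`: it has nonempty uniform witnesses whose nonempty variable sets
partition `W` and both meet `Y`. -/
def BreaksOn {V : Type*} (H : Set (Asg V)) (W Y : Set V) : Prop :=
  ∃ (H₁ H₂ : Set (Asg V)) (S₁ S₂ : Set V),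
    H₁.Nonempty ∧ H₂.Nonempty ∧ UniformOn H₁ S₁ ∧ UniformOn H₂ S₂ ∧
    S₁.Nonempty ∧ S₂.Nonempty ∧ S₁ ∩ S₂ = ∅ ∧ S₁ ∪ S₂ = W ∧
    H = AsgProd H₁ H₂ ∧ (Y ∩ S₁).Nonempty ∧ (Y ∩ S₂).Nonempty

/-- Combination of finitely many assignments (with pairwise disjoint domains). -/
def Asg.combine {V : Type*} {m : ℕ} (c : Fin m → Asg V) : Asg V :=
  fun x => (List.finRange m).foldr (fun i acc => (c i x).orElse (fun _ => acc)) none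

/-- The product `H 0 × ⋯ × H (m-1)` of finitely many sets of assignments. -/
def bigProd {V : Type*} {m : ℕ} (H : Fin m → Set (Asg V)) : Set (Asg V) :=
  {g | ∃ c : Fin m → Asg V, (∀ i, c i ∈ H i) ∧ g = Asg.combine c}

/-- `M` is a matching of `G` (a set of pairwise disjoint edges of `G`). -/
def IsMatchingSet {V : Type*} (G : SimpleGraph V) (M : Set (Sym2 V)) : Prop :=
  M ⊆ G.edgeSet ∧ ∀ e ∈ M, ∀ f ∈ M, e ≠ f → ∀ x, x ∈ e → x ∉ f

/-- The set `V(M)` of endpoints of a set of edges. -/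
def endpoints {V : Type*} (M : Set (Sym2 V)) : Set V := {v | ∃ e ∈ M, v ∈ e}

/-- `M` is an induced matching of `G`: a matching such that the subgraph of `G`
induced by `V(M)` has edge set exactly `M`. -/
def IsInducedMatchingSet {V : Type*} (G : SimpleGraph V) (M : Set (Sym2 V)) : Prop :=
  IsMatchingSet G M ∧ ∀ e ∈ G.edgeSet, (∀ v ∈ e, v ∈ endpoints M) → e ∈ M

/-- `P` is a prefix of the linear order `π`. -/
def IsPrefix {V : Type*} (π : LinearOrder V) (P : Set V) : Prop :=
  ∀ x ∈ P, ∀ y, π.le y x → y ∈ P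

/-- `M` crosses the linear order `π`: some prefix of `π` contains exactly one
endpoint of every edge of `M`. -/
def Crosses {V : Type*} (π : LinearOrder V) (M : Set (Sym2 V)) : Prop :=
  ∃ P : Set V, IsPrefix π P ∧ ∀ e ∈ M, ∃ x y, e = s(x, y) ∧ x ∈ P ∧ y ∉ P

/-- Linear special induced matching width: the minimum over linear orders of the
maximum size of an induced matching crossing the order. -/
noncomputable def lsimw {V : Type*} (G : SimpleGraph V) : ℕ :=
  sInf {k | ∃ π : LinearOrder V, ∀ M : Set (Sym2 V),
    IsInducedMatchingSet G M → Crosses π M → M.ncard ≤ k}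

/-- Linear maximum matching width: as `lsimw` but with arbitrary matchings. -/
noncomputable def lmmw {V : Type*} (G : SimpleGraph V) : ℕ :=
  sInf {k | ∃ π : LinearOrder V, ∀ M : Set (Sym2 V),
    IsMatchingSet G M → Crosses π M → M.ncard ≤ k}

/-- The bipartite double cover `G*`; vertex `v[1]` is `(v, false)` and `v[2]` is `(v, true)`. -/
def doubleCover {V : Type*} (G : SimpleGraph V) : SimpleGraph (V × Bool) where
  Adj a b := G.Adj a.1 b.1 ∧ a.2 ≠ b.2
  symm := ⟨fun a b h => ⟨h.1.symm, h.2.symm⟩⟩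
  loopless := ⟨fun a h => h.2 rfl⟩

/-- `M`, a matching of the double cover, neatly crosses a linear order `π` of
`V × Bool`: every edge of `M` goes from `U[1]` to `W[2]` for some `U, W ⊆ V`, and
some prefix of `π` contains all endpoints of `M` on one of the two sides and none
of the endpoints on the other side. -/
def NeatlyCrosses {V : Type*} (π : LinearOrder (V × Bool)) (M : Set (Sym2 (V × Bool))) : Prop :=
  ∃ U W : Set V,
    (∀ e ∈ M, ∃ u ∈ U, ∃ w ∈ W, e = s((u, false), (w, true))) ∧
    ∃ P : Set (V × Bool), IsPrefix π P ∧
      ((∀ v ∈ endpoints M, (v.2 = false → v ∈ P) ∧ (v.2 = true → v ∉ P)) ∨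
       (∀ v ∈ endpoints M, (v.2 = true → v ∈ P) ∧ (v.2 = false → v ∉ P)))

/-- The `n × n` grid graph. -/
def gridGraph (n : ℕ) : SimpleGraph (Fin n × Fin n) :=
  SimpleGraph.fromRel (fun p q =>
    (p.1 = q.1 ∧ (p.2 : ℕ) + 1 = (q.2 : ℕ)) ∨ (p.2 = q.2 ∧ (p.1 : ℕ) + 1 = (q.1 : ℕ)))

/-- The spanning subgraph of the `n × n` grid consisting of the horizontal edges. -/
def gridHoriz (n : ℕ) : SimpleGraph (Fin n × Fin n) :=
  SimpleGraph.fromRel (fun p q => p.1 = q.1 ∧ (p.2 : ℕ) + 1 = (q.2 : ℕ))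

/-- A clause: a set of literals, a literal being a variable with a polarity
(`true` = positive). -/
abbrev Clause (W : Type*) := Set (W × Bool)

/-- A CNF: a set of clauses. -/
abbrev CNF (W : Type*) := Set (Clause W)

/-- A total assignment satisfies a CNF. -/
def Satisfies {W : Type*} (a : W → Bool) (φ : CNF W) : Prop :=
  ∀ C ∈ φ, ∃ l ∈ C, a l.1 = l.2

/-- The set of variables occurring in a CNF. -/
def cnfVars {W : Type*} (φ : CNF W) : Set W := {x | ∃ C ∈ φ, ∃ b, (x, b) ∈ C}

/-- The CNF `φ(G)`: a positive clause `(u ∨ v)` for every edge of `G`. -/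
def phiCNF {V : Type*} (G : SimpleGraph V) : CNF V :=
  {C | ∃ e ∈ G.edgeSet, C = {l | ∃ x ∈ e, l = (x, true)}}

/-- The CNF `ψ(G)`: the positive edge clauses of the double cover `G*` together with
the two all-negative clauses `⋁ᵥ ¬v[1]` and `⋁ᵥ ¬v[2]`. -/
def psiCNF {V : Type*} (G : SimpleGraph V) : CNF (V × Bool) :=
  {C | ∃ e ∈ (doubleCover G).edgeSet, C = {l | ∃ x ∈ e, l = (x, true)}} ∪
    {{l | ∃ v : V, l = ((v, false), false)}, {l | ∃ v : V, l = ((v, true), false)}}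

/-- Make a total assignment out of a partial one (defaulting to `false` off the domain). -/
def Asg.totalize {W : Type*} (g : Asg W) : W → Bool := fun x => (g x).getD false

/-- `S(φ)|_g`: assignments `h` with domain `var(φ) \ var(g)` such that `g ∪ h` satisfies `φ`. -/
def solsRestrict {W : Type*} (φ : CNF W) (g : Asg W) : Set (Asg W) :=
  {h | h.dom = cnfVars φ \ g.dom ∧ Satisfies (Asg.totalize (Asg.union g h)) φ}

/-- A partial assignment satisfies a clause. -/
def satClausePartial {W : Type*} (g : Asg W) (C : Clause W) : Prop :=
  ∃ l ∈ C, g l.1 = some l.2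

/-- The CNF `φ[g]`: delete clauses satisfied by `g` and remove from the remaining
clauses all literals whose variable is assigned by `g`. -/
def cnfRestrictFormula {W : Type*} (φ : CNF W) (g : Asg W) : CNF W :=
  {C' | ∃ C ∈ φ, ¬ satClausePartial g C ∧ C' = {l ∈ C | l.1 ∉ g.dom}}

/-- The total satisfying assignments of a CNF, over its variable set. -/
def totalSols {W : Type*} (φ : CNF W) : Set (Asg W) :=
  {h | h.dom = cnfVars φ ∧ Satisfies (Asg.totalize h) φ}

/-- All assignments with domain `Y`. -/
def allAsgOn {W : Type*} (Y : Set W) : Set (Asg W) := {h | h.dom = Y}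

/-- Binary decision trees over variables `X`. -/
inductive DTree (X : Type*) where
  | leaf : Bool → DTree X
  | node : X → DTree X → DTree X → DTree X

namespace DTree

/-- The size (number of nodes) of a decision tree. -/
def size {X : Type*} : DTree X → ℕ
  | leaf _ => 1
  | node _ t0 t1 => 1 + t0.size + t1.size

/-- The variables occurring in a decision tree. -/
def varsOf {X : Type*} : DTree X → Set X
  | leaf _ => ∅
  | node x t0 t1 => {x} ∪ t0.varsOf ∪ t1.varsOf

/-- The read-once condition: no variable occurs twice on a root-leaf path. -/
def ReadOnce {X : Type*} : DTree X → Prop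
  | leaf _ => True
  | node x t0 t1 => x ∉ t0.varsOf ∧ x ∉ t1.varsOf ∧ t0.ReadOnce ∧ t1.ReadOnce

/-- Evaluation of a decision tree on a total assignment. -/
def eval {X : Type*} : DTree X → (X → Bool) → Bool
  | leaf b, _ => b
  | node x t0 t1, a => if a x then t1.eval a else t0.eval a

end DTree

/-- `(τ, B)` is a tree decomposition of `H`. -/
def IsTreeDecomp {V : Type u} {T : Type v} (H : SimpleGraph V) (τ : SimpleGraph T)
    (B : T → Set V) : Prop :=
  τ.IsTree ∧ (∀ e ∈ H.edgeSet, ∃ t, ∀ v ∈ e, v ∈ B t) ∧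
    (∀ v : V, (τ.induce {t | v ∈ B t}).Connected)

/-- The treewidth of a graph: minimum width over all tree decompositions. -/
noncomputable def treewidth {V : Type u} (H : SimpleGraph V) : ℕ :=
  sInf {k | ∃ (T : Type) (τ : SimpleGraph T) (B : T → Set V),
    IsTreeDecomp H τ B ∧ ∀ t, (B t).ncard ≤ k + 1}

/-- `B : Fin m → Set V` is a path decomposition of `H`. -/
def IsPathDecomp {V : Type u} (H : SimpleGraph V) (m : ℕ) (B : Fin m → Set V) : Prop :=
  (∀ e ∈ H.edgeSet, ∃ i, ∀ v ∈ e, v ∈ B i) ∧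
    (∀ v : V, (∃ i, v ∈ B i) ∧
      ∀ i j k : Fin m, i ≤ j → j ≤ k → v ∈ B i → v ∈ B k → v ∈ B j)

/-- The pathwidth of a graph: minimum width over all path decompositions. -/
noncomputable def pathwidth {V : Type u} (H : SimpleGraph V) : ℕ :=
  sInf {k | ∃ (m : ℕ) (B : Fin m → Set V), IsPathDecomp H m B ∧ ∀ i, (B i).ncard ≤ k + 1}

/-- The incidence graph of a CNF: variables on one side, clauses on the other,
a variable adjacent to exactly the clauses in which it occurs. -/
def incidenceGraph {W : Type u} (φ : CNF W) : SimpleGraph (W ⊕ {C : Clause W // C ∈ φ}) :=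
  SimpleGraph.fromRel (fun a b => ∃ (x : W) (C : {C : Clause W // C ∈ φ}),
    a = Sum.inl x ∧ b = Sum.inr C ∧ ∃ bb : Bool, (x, bb) ∈ C.1)

open SimpleGraph

section Pend
variable {T : Type*} {L : Type*} (τ : SimpleGraph T) (f : L → T)

/-- Tree `τ` with a pendant leaf `l` attached at `f l` for each `l : L`. -/
def pend : SimpleGraph (T ⊕ L) :=
  SimpleGraph.fromRel (fun a b =>
    (∃ t s, a = Sum.inl t ∧ b = Sum.inl s ∧ τ.Adj t s) ∨ (∃ l, a = Sum.inl (f l) ∧ b = Sum.inr l))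

variable {τ f}

lemma pend_adj_inl_inl {a b : T} : (pend τ f).Adj (Sum.inl a) (Sum.inl b) ↔ τ.Adj a b := by
  constructor
  · rintro ⟨hne, (⟨t, s, ht, hs, h⟩ | ⟨l, h1, h2⟩) | (⟨t, s, ht, hs, h⟩ | ⟨l, h1, h2⟩)⟩
    · cases ht; cases hs; exact h
    · exact absurd h2 (by simp)
    · cases ht; cases hs; exact h.symm
    · exact absurd h2 (by simp)
  · intro h
    exact ⟨by simpa using h.ne, Or.inl (Or.inl ⟨a, b, rfl, rfl, h⟩)⟩

lemma pend_adj_inl_inr {t : T} {l : L} : (pend τ f).Adj (Sum.inl t) (Sum.inr l) ↔ t = f l := by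
  constructor
  · rintro ⟨hne, (⟨t', s, ht, hs, h⟩ | ⟨l', h1, h2⟩) | (⟨t', s, ht, hs, h⟩ | ⟨l', h1, h2⟩)⟩
    · exact absurd hs (by simp)
    · cases h2; exact Sum.inl.inj h1
    · exact absurd ht (by simp)
    · exact absurd h1 (by simp)
  · rintro rfl
    exact ⟨by simp, Or.inl (Or.inr ⟨l, rfl, rfl⟩)⟩

lemma pend_adj_inr {l : L} {x : T ⊕ L} (h : (pend τ f).Adj (Sum.inr l) x) : x = Sum.inl (f l) := by
  rcases h with ⟨hne, (⟨t, s, ht, hs, h⟩ | ⟨l', h1, h2⟩) | (⟨t, s, ht, hs, h⟩ | ⟨l', h1, h2⟩)⟩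
  · exact absurd ht (by simp)
  · exact absurd h1 (by simp)
  · exact absurd hs (by simp)
  · cases Sum.inr.inj h2; exact h1

/-- Embedding hom. -/
def pendHom : τ →g pend τ f where
  toFun := Sum.inl
  map_rel' := fun h => pend_adj_inl_inl.mpr h

lemma pend_connected (h : τ.Connected) : (pend τ f).Connected := by
  have hreach : ∀ a : T ⊕ L, ∃ t : T, (pend τ f).Reachable a (Sum.inl t) := by
    rintro (t | l)
    · exact ⟨t, Reachable.refl _⟩
    · exact ⟨f l, ((pend_adj_inl_inr (τ := τ) (f := f)).mpr rfl).symm.reachable⟩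
  rw [connected_iff]
  refine ⟨fun a b => ?_, by obtain ⟨t⟩ := h.nonempty; exact ⟨Sum.inl t⟩⟩
  obtain ⟨ta, ha⟩ := hreach a
  obtain ⟨tb, hb⟩ := hreach b
  have hm : (pend τ f).Reachable (Sum.inl ta) (Sum.inl tb) :=
    (h.preconnected ta tb).map (pendHom (τ := τ) (f := f))
  exact ha.trans (hm.trans hb.symm)

lemma pend_proj : ∀ (a b : T ⊕ L) (w : (pend τ f).Walk a b),
    (∀ v ∈ w.support, ∃ t : T, v = Sum.inl t) →
    ∃ (x y : T) (w' : τ.Walk x y), a = Sum.inl x ∧ b = Sum.inl y ∧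
      w'.edges.map (Sym2.map Sum.inl) = w.edges ∧ w'.support.map Sum.inl = w.support := by
  intro a b w
  induction w with
  | nil =>
    intro h
    obtain ⟨t, ht⟩ := h _ (Walk.start_mem_support Walk.nil)
    exact ⟨t, t, Walk.nil, ht, ht, rfl, by simp [ht]⟩
  | @cons u c d h p ih =>
    intro hs
    obtain ⟨x, y, w', rfl, rfl, he, hsup⟩ := ih (fun v hv => hs v (by simp [hv]))
    obtain ⟨z, rfl⟩ := hs u (by simp)
    have hadj : τ.Adj z x := pend_adj_inl_inl.mp h
    refine ⟨z, y, Walk.cons hadj w', rfl, rfl, ?_, ?_⟩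
    · simp [Walk.edges_cons, he]
    · simp [Walk.support_cons, hsup]

lemma pend_isAcyclic (hτ : τ.IsAcyclic) : (pend τ f).IsAcyclic := by
  classical
  intro v c hc
  have hno : ∀ l : L, Sum.inr l ∉ c.support := by
    intro l hl
    have hc' := hc.rotate hl
    generalize c.rotate _ hl = c' at hc'
    cases c' with
    | nil => exact hc'.ne_nil rfl
    | cons h q =>
      rename_i zz
      have hz : zz = Sum.inl (f l) := pend_adj_inr h
      subst hz
      -- q : Walk (inl (f l)) (inr l)
      obtain ⟨z2, h2, q3, hq⟩ := q.reverse.exists_eq_cons_of_ne (by simp)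
      have hz2 : z2 = Sum.inl (f l) := pend_adj_inr h2
      subst hz2
      have hnd : q.support.Nodup := by
        have := hc'.support_nodup
        simpa [Walk.support_cons] using this
      have hnd3 : q3.support.Nodup := by
        have : q.reverse.support.Nodup := by
          rw [Walk.support_reverse, List.nodup_reverse]; exact hnd
        rw [hq, Walk.support_cons] at this
        exact this.of_cons
      -- q3 : Walk (inl (f l)) (inl (f l)), nodup support → nil
      have hq3nil : q3.length = 0 := by
        rcases hq3 : q3 with _ | ⟨h4, q4⟩
        · rfl
        · exfalso
          rw [hq3, Walk.support_cons] at hnd3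
          exact (List.nodup_cons.mp hnd3).1 q4.end_mem_support
      have hlen : (Walk.cons h q).length = 2 := by
        have hq1 : q.reverse.length = 1 := by
          rw [hq]; simp [hq3nil]
        simp at hq1
        simp [Walk.length_cons]
        omega
      have := hc'.three_le_length
      omega
  obtain ⟨tv, rfl⟩ : ∃ t : T, v = Sum.inl t := by
    rcases v with t | l
    · exact ⟨t, rfl⟩
    · exact absurd c.start_mem_support (hno l)
  obtain ⟨x, y, w', hx, hy, he, hsup⟩ := pend_proj _ _ c (by
    intro u hu
    rcases u with t | l
    · exact ⟨t, rfl⟩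
    · exact absurd hu (hno l))
  obtain rfl := Sum.inl.inj hx
  obtain rfl := Sum.inl.inj hy
  have hlen : w'.length = c.length := by
    rw [← Walk.length_edges, ← Walk.length_edges, ← he, List.length_map]
  refine hτ w' ⟨⟨⟨?_⟩, ?_⟩, ?_⟩
  · have := hc.edges_nodup
    rw [← he] at this
    exact this.of_map _
  · intro hnil
    have h3 := hc.three_le_length
    rw [hnil] at hlen
    simp at hlen
    omega
  · have := hc.support_nodup
    have htail : w'.support.tail.map Sum.inl = c.support.tail := by
      rw [← hsup]
      cases w'.support with
      | nil => rfl
      | cons a l => rfl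
    rw [← htail] at this
    exact this.of_map _

lemma pend_isTree (hτ : τ.IsTree) : (pend τ f).IsTree :=
  ⟨pend_connected hτ.isConnected, pend_isAcyclic hτ.IsAcyclic⟩

end Pend


open SimpleGraph

section MainAux
variable {V : Type} {G : SimpleGraph V}

lemma doubleCover_edge_decomp {e : Sym2 (V × Bool)} (he : e ∈ (doubleCover G).edgeSet) :
    ∃ u w : V, G.Adj u w ∧ e = s((u, false), (w, true)) := by
  induction e with
  | _ p q =>
    rw [SimpleGraph.mem_edgeSet] at he
    obtain ⟨hadj, hne⟩ := he
    cases hb : p.2 <;> cases hb' : q.2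
    · rw [hb, hb'] at hne; exact absurd rfl hne
    · exact ⟨p.1, q.1, hadj, by rw [show p = (p.1, false) from Prod.ext rfl hb,
        show q = (q.1, true) from Prod.ext rfl hb']⟩
    · refine ⟨q.1, p.1, hadj.symm, ?_⟩
      rw [Sym2.eq_swap]
      rw [show p = (p.1, true) from Prod.ext rfl hb, show q = (q.1, false) from Prod.ext rfl hb']
    · rw [hb, hb'] at hne; exact absurd rfl hne

lemma trivialDecomp (V : Type) [Fintype V] (G : SimpleGraph V) :
    ∃ (T : Type) (τ : SimpleGraph T) (B : T → Set V),
      IsTreeDecomp G τ B ∧ ∀ t, (B t).ncard ≤ Fintype.card V + 1 := by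
  refine ⟨Unit, ⊥, fun _ => Set.univ, ⟨⟨?_, isAcyclic_bot⟩, ?_, ?_⟩, ?_⟩
  · rw [connected_iff]
    exact ⟨fun a b => by cases a; cases b; exact Reachable.refl _, ⟨()⟩⟩
  · exact fun e _ => ⟨(), fun v _ => Set.mem_univ v⟩
  · intro v
    rw [connected_iff]
    refine ⟨fun a b => ?_, ⟨⟨(), Set.mem_univ _⟩⟩⟩
    have : a = b := Subtype.ext (Subsingleton.elim _ _)
    rw [this]
  · intro t
    show (Set.univ : Set V).ncard ≤ _
    rw [Set.ncard_univ, Nat.card_eq_fintype_card]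
    omega

end MainAux

/-- if `G` has no isolated vertices and `tw(G) ≤ k`, then the incidence
graph of the CNF `ψ(G)` has treewidth at most `2k+3`. -/
theorem stmt13 {V : Type} [Fintype V] (G : SimpleGraph V)
    (hiso : ∀ v : V, ∃ u, G.Adj v u) (k : ℕ) (htw : treewidth G ≤ k) :
    treewidth (incidenceGraph (psiCNF G)) ≤ 2 * k + 3 := by
  classical
  set S : Set ℕ := {k' | ∃ (T : Type) (τ : SimpleGraph T) (B : T → Set V),
    IsTreeDecomp G τ B ∧ ∀ t, (B t).ncard ≤ k' + 1} with hS
  have hSne : S.Nonempty := ⟨Fintype.card V, trivialDecomp V G⟩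
  have htwS : treewidth G = sInf S := rfl
  rw [htwS] at htw
  obtain ⟨T, τ, B, ⟨htree, hcov, hvconn⟩, hbag0⟩ := Nat.sInf_mem hSne
  have hbag : ∀ t, (B t).ncard ≤ k + 1 := fun t => le_trans (hbag0 t) (by omega)
  -- if G has an edge then k ≥ 1
  have hk1 : ∀ u w : V, G.Adj u w → 1 ≤ k := by
    intro u w huw
    obtain ⟨t, ht⟩ := hcov s(u, w) ((SimpleGraph.mem_edgeSet G).mpr huw)
    have h2 : 1 < (B t).ncard :=
      (Set.one_lt_ncard_iff (Set.toFinite _)).mpr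
        ⟨u, w, ht u (Sym2.mem_mk_left u w), ht w (Sym2.mem_mk_right u w), huw.ne⟩
    have := hbag0 t
    omega
  -- clause-side objects
  set Cl : Type := {C : Clause (V × Bool) // C ∈ psiCNF G} with hCl
  have hneg1m : ({l | ∃ v : V, l = ((v, false), false)} : Clause (V × Bool)) ∈ psiCNF G :=
    Or.inr (Or.inl rfl)
  have hneg2m : ({l | ∃ v : V, l = ((v, true), false)} : Clause (V × Bool)) ∈ psiCNF G :=
    Or.inr (Or.inr rfl)
  set neg1 : Cl := ⟨_, hneg1m⟩ with hneg1
  set neg2 : Cl := ⟨_, hneg2m⟩ with hneg2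
  set L : Type := {p : V × V // G.Adj p.1 p.2} with hL
  have heCm : ∀ l : L, ({ll | ∃ x ∈ (s((l.1.1, false), (l.1.2, true)) : Sym2 (V × Bool)),
      ll = (x, true)} : Clause (V × Bool)) ∈ psiCNF G := by
    intro l
    exact Or.inl ⟨s((l.1.1, false), (l.1.2, true)),
      (SimpleGraph.mem_edgeSet _).mpr ⟨l.2, by simp⟩, rfl⟩
  set Ce : L → Cl := fun l => ⟨_, heCm l⟩ with hCe
  -- edge clauses are not the negative clauses, and Ce is injective
  have hCene1 : ∀ l : L, Ce l ≠ neg1 := by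
    intro l h
    have hmem : (((l.1.1, false), true) : (V × Bool) × Bool) ∈ (Ce l).1 :=
      ⟨(l.1.1, false), by simp, rfl⟩
    rw [h] at hmem
    obtain ⟨v, hv⟩ := hmem
    simpa using congrArg Prod.snd hv
  have hCene2 : ∀ l : L, Ce l ≠ neg2 := by
    intro l h
    have hmem : (((l.1.1, false), true) : (V × Bool) × Bool) ∈ (Ce l).1 :=
      ⟨(l.1.1, false), by simp, rfl⟩
    rw [h] at hmem
    obtain ⟨v, hv⟩ := hmem
    simpa using congrArg Prod.snd hv
  have hCeinj : ∀ l l' : L, Ce l = Ce l' → l = l' := by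
    intro l l' h
    have h1 : (((l.1.1, false), true) : (V × Bool) × Bool) ∈ (Ce l').1 := by
      rw [← h]; exact ⟨(l.1.1, false), by simp, rfl⟩
    have h2 : (((l.1.2, true), true) : (V × Bool) × Bool) ∈ (Ce l').1 := by
      rw [← h]; exact ⟨(l.1.2, true), by simp, rfl⟩
    obtain ⟨x1, hx1, he1⟩ := h1
    obtain ⟨x2, hx2, he2⟩ := h2
    have hx1' : x1 = (l.1.1, false) := (congrArg Prod.fst he1).symm
    have hx2' : x2 = (l.1.2, true) := (congrArg Prod.fst he2).symm
    subst hx1' hx2'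
    rw [Sym2.mem_iff] at hx1 hx2
    have ha : l.1.1 = l'.1.1 := by
      rcases hx1 with h | h
      · exact congrArg (fun p => p.1) h
      · simpa using congrArg Prod.snd h
    have hb : l.1.2 = l'.1.2 := by
      rcases hx2 with h | h
      · simpa using congrArg Prod.snd h
      · exact congrArg (fun p => p.1) h
    exact Subtype.ext (Prod.ext ha hb)
  -- host nodes
  have hhost : ∀ l : L, ∃ t, l.1.1 ∈ B t ∧ l.1.2 ∈ B t := by
    intro l
    obtain ⟨t, ht⟩ := hcov s(l.1.1, l.1.2) ((SimpleGraph.mem_edgeSet G).mpr l.2)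
    exact ⟨t, ht _ (Sym2.mem_mk_left _ _), ht _ (Sym2.mem_mk_right _ _)⟩
  choose host hh1 hh2 using hhost
  -- the new tree and bags
  set τ' : SimpleGraph (T ⊕ L) := pend τ host with hτ'
  set B' : T ⊕ L → Set ((V × Bool) ⊕ Cl) := fun t' =>
    Sum.rec (fun t => {x | ∃ v ∈ B t, ∃ b : Bool, x = Sum.inl (v, b)} ∪
        {Sum.inr neg1, Sum.inr neg2})
      (fun l => {Sum.inl (l.1.1, false), Sum.inl (l.1.2, true), Sum.inr (Ce l),
        Sum.inr neg1, Sum.inr neg2}) t' with hB'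
  -- basic bag membership facts
  have hmem_inl : ∀ (t : T) (v : V) (b : Bool),
      Sum.inl (v, b) ∈ B' (Sum.inl t) ↔ v ∈ B t := by
    intro t v b
    simp only [hB', Set.mem_union, Set.mem_setOf_eq, Set.mem_insert_iff, Set.mem_singleton_iff]
    constructor
    · rintro (⟨v', hv', b', hvb⟩ | h | h)
      · obtain ⟨h1, h2⟩ := Prod.mk.injEq .. ▸ Sum.inl.inj hvb
        exact h1 ▸ hv'
      · simp at h
      · simp at h
    · intro hv
      exact Or.inl ⟨v, hv, b, rfl⟩
  have hneg_mem : ∀ t', Sum.inr neg1 ∈ B' t' ∧ Sum.inr neg2 ∈ B' t' := by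
    rintro (t | l)
    · exact ⟨Or.inr (Or.inl rfl), Or.inr (Or.inr rfl)⟩
    · refine ⟨?_, ?_⟩ <;> simp [hB']
  -- membership in target set
  have hmem : 2 * k + 3 ∈ {k' | ∃ (T₂ : Type) (τ₂ : SimpleGraph T₂)
      (B₂ : T₂ → Set ((V × Bool) ⊕ Cl)),
      IsTreeDecomp (incidenceGraph (psiCNF G)) τ₂ B₂ ∧ ∀ t, (B₂ t).ncard ≤ k' + 1} := by
    refine ⟨T ⊕ L, τ', B', ⟨pend_isTree htree, ?_, ?_⟩, ?_⟩
    · -- edge cover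
      have key : ∀ (x : V × Bool) (C : Cl), (∃ bb : Bool, (x, bb) ∈ C.1) →
          ∃ t, Sum.inl x ∈ B' t ∧ Sum.inr C ∈ B' t := by
        rintro x ⟨C1, hC1⟩ ⟨bb, hxC⟩
        have hxC2 : (x, bb) ∈ C1 := hxC
        clear hxC
        simp only [psiCNF, Set.mem_union, Set.mem_setOf_eq, Set.mem_insert_iff,
          Set.mem_singleton_iff] at hC1
        rcases hC1 with ⟨e', he', hC1e⟩ | (hC1e | hC1e)
        · obtain ⟨u, w, hadj, rfl⟩ := doubleCover_edge_decomp he'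
          have hCeq : (⟨C1, hC1⟩ : Cl) = Ce ⟨(u, w), hadj⟩ := Subtype.ext hC1e
          rw [hCeq]
          refine ⟨Sum.inr ⟨(u, w), hadj⟩, ?_, ?_⟩
          · rw [hC1e] at hxC2
            obtain ⟨y, hy, hxy⟩ := hxC2
            have hx : x = y := congrArg (fun p => p.1) hxy
            subst hx
            rcases Sym2.mem_iff.mp hy with rfl | rfl
            · exact Or.inl rfl
            · exact Or.inr (Or.inl rfl)
          · exact Or.inr (Or.inr (Or.inl rfl))
        · have hCeq : (⟨C1, hC1⟩ : Cl) = neg1 := Subtype.ext hC1e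
          rw [hC1e] at hxC2
          obtain ⟨v, hv⟩ := hxC2
          have hx : x = (v, false) := congrArg (fun p => p.1) hv
          obtain ⟨⟨t0, ht0⟩⟩ := (hvconn v).nonempty
          refine ⟨Sum.inl t0, ?_, ?_⟩
          · rw [hx]; exact (hmem_inl t0 v false).mpr ht0
          · rw [hCeq]; exact (hneg_mem (Sum.inl t0)).1
        · have hCeq : (⟨C1, hC1⟩ : Cl) = neg2 := Subtype.ext hC1e
          rw [hC1e] at hxC2
          obtain ⟨v, hv⟩ := hxC2
          have hx : x = (v, true) := congrArg (fun p => p.1) hv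
          obtain ⟨⟨t0, ht0⟩⟩ := (hvconn v).nonempty
          refine ⟨Sum.inl t0, ?_, ?_⟩
          · rw [hx]; exact (hmem_inl t0 v true).mpr ht0
          · rw [hCeq]; exact (hneg_mem (Sum.inl t0)).2
      intro e he
      induction e with
      | _ a b =>
        rw [SimpleGraph.mem_edgeSet] at he
        have he' : a ≠ b ∧ _ := (SimpleGraph.fromRel_adj _ a b).mp he
        obtain ⟨hne, hr | hr⟩ := he'
        · obtain ⟨x, C, rfl, rfl, hbb⟩ := hr
          obtain ⟨t, h1, h2⟩ := key x C hbb
          refine ⟨t, fun v hv => ?_⟩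
          rcases Sym2.mem_iff.mp hv with rfl | rfl
          exacts [h1, h2]
        · obtain ⟨x, C, rfl, rfl, hbb⟩ := hr
          obtain ⟨t, h1, h2⟩ := key x C hbb
          refine ⟨t, fun v hv => ?_⟩
          rcases Sym2.mem_iff.mp hv with rfl | rfl
          exacts [h2, h1]
    · -- vertex connectivity
      rintro (⟨v, b⟩ | ⟨C1, hC1⟩)
      · -- variable vertex
        set SS : Set (T ⊕ L) := {t' | Sum.inl (v, b) ∈ B' t'} with hSS
        have hSr : ∀ l : L, Sum.inr l ∈ SS ↔
            ((v, b) = (l.1.1, false) ∨ (v, b) = (l.1.2, true)) := by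
          intro l
          simp only [hSS, hB', Set.mem_setOf_eq, Set.mem_insert_iff, Set.mem_singleton_iff]
          constructor
          · rintro (h | h | h | h | h)
            · exact Or.inl (Sum.inl.inj h)
            · exact Or.inr (Sum.inl.inj h)
            all_goals simp at h
          · rintro (h | h)
            · exact Or.inl (congrArg Sum.inl h)
            · exact Or.inr (Or.inl (congrArg Sum.inl h))
        have hSl : ∀ t : T, Sum.inl t ∈ SS ↔ v ∈ B t := fun t => hmem_inl t v b
        have hstep : ∀ (x : T ⊕ L) (hx : x ∈ SS), ∃ (t : T) (ht : v ∈ B t),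
            (τ'.induce SS).Reachable ⟨x, hx⟩ ⟨Sum.inl t, (hSl t).mpr ht⟩ := by
          rintro (t | l) hx
          · exact ⟨t, (hSl t).mp hx, Reachable.refl _⟩
          · have hvB : v ∈ B (host l) := by
              rcases (hSr l).mp hx with h | h
              · have hv' : v = (l : V × V).1 := congrArg (fun p => p.1) h
                rw [hv']; exact hh1 l
              · have hv' : v = (l : V × V).2 := congrArg (fun p => p.1) h
                rw [hv']; exact hh2 l
            refine ⟨host l, hvB, ?_⟩
            have hadj : τ'.Adj (Sum.inr l) (Sum.inl (host l)) :=
              (pend_adj_inl_inr.mpr rfl).symm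
            exact (Adj.reachable (by exact hadj :
              (τ'.induce SS).Adj ⟨Sum.inr l, hx⟩ ⟨Sum.inl (host l), (hSl _).mpr hvB⟩))
        rw [connected_iff]
        constructor
        · rintro ⟨x, hx⟩ ⟨y, hy⟩
          obtain ⟨t1, ht1, hr1⟩ := hstep x hx
          obtain ⟨t2, ht2, hr2⟩ := hstep y hy
          let F : τ.induce {t | v ∈ B t} →g τ'.induce SS :=
            ⟨fun x => ⟨Sum.inl x.1, (hSl x.1).mpr x.2⟩, fun hadj => pend_adj_inl_inl.mpr hadj⟩
          have hmid : (τ'.induce SS).Reachable ⟨Sum.inl t1, (hSl t1).mpr ht1⟩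
              ⟨Sum.inl t2, (hSl t2).mpr ht2⟩ := by
            have := ((hvconn v).preconnected ⟨t1, ht1⟩ ⟨t2, ht2⟩).map F
            exact this
          exact (hr1.trans hmid).trans hr2.symm
        · obtain ⟨⟨t0, ht0⟩⟩ := (hvconn v).nonempty
          exact ⟨⟨Sum.inl t0, (hSl t0).mpr ht0⟩⟩
      · -- clause vertex
        have huniv : ∀ CC : Cl, (∀ t', Sum.inr CC ∈ B' t') →
            (τ'.induce {t' | Sum.inr CC ∈ B' t'}).Connected := by
          intro CC hCC
          have hU : {t' | Sum.inr CC ∈ B' t'} = Set.univ :=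
            Set.eq_univ_of_forall hCC
          rw [hU]
          exact ((induceUnivIso τ').connected_iff).mpr (pend_connected htree.isConnected)
        have hC1' := hC1
        simp only [psiCNF, Set.mem_union, Set.mem_setOf_eq, Set.mem_insert_iff,
          Set.mem_singleton_iff] at hC1'
        rcases hC1' with ⟨e', he', hC1e⟩ | (hC1e | hC1e)
        · obtain ⟨u, w, hadj, rfl⟩ := doubleCover_edge_decomp he'
          set l₀ : L := ⟨(u, w), hadj⟩ with hl₀
          have hCeq : (⟨C1, hC1⟩ : Cl) = Ce l₀ := Subtype.ext hC1e
          rw [hCeq]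
          have hSone : {t' | Sum.inr (Ce l₀) ∈ B' t'} = {Sum.inr l₀} := by
            ext t'
            cases t' with
            | inl t =>
              simp only [Set.mem_setOf_eq, hB', Set.mem_union, Set.mem_insert_iff,
                Set.mem_singleton_iff]
              constructor
              · rintro (⟨v', hv', b', hvb⟩ | h | h)
                · simp at hvb
                · exact absurd (Sum.inr.inj h) (hCene1 l₀)
                · exact absurd (Sum.inr.inj h) (hCene2 l₀)
              · intro h; simp at h
            | inr l =>
              simp only [Set.mem_setOf_eq, hB', Set.mem_insert_iff, Set.mem_singleton_iff]
              constructor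
              · rintro (h | h | h | h | h)
                · simp at h
                · simp at h
                · exact congrArg Sum.inr ((hCeinj _ _ (Sum.inr.inj h)).symm)
                · exact absurd (Sum.inr.inj h) (hCene1 l₀)
                · exact absurd (Sum.inr.inj h) (hCene2 l₀)
              · intro h
                cases Sum.inr.inj h
                exact Or.inr (Or.inr (Or.inl rfl))
          rw [hSone]
          rw [connected_iff]
          refine ⟨?_, ⟨⟨Sum.inr l₀, rfl⟩⟩⟩
          rintro ⟨x, hx⟩ ⟨y, hy⟩
          have hxy : x = y := by
            rw [Set.mem_singleton_iff] at hx hy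
            rw [hx, hy]
          subst hxy
          exact Reachable.refl _
        · have hCeq : (⟨C1, hC1⟩ : Cl) = neg1 := Subtype.ext hC1e
          rw [hCeq]
          exact huniv neg1 (fun t' => (hneg_mem t').1)
        · have hCeq : (⟨C1, hC1⟩ : Cl) = neg2 := Subtype.ext hC1e
          rw [hCeq]
          exact huniv neg2 (fun t' => (hneg_mem t').2)
    · -- bag sizes
      rintro (t | l)
      · have himg : {x : (V × Bool) ⊕ Cl | ∃ v ∈ B t, ∃ b : Bool, x = Sum.inl (v, b)} =
            (fun v => (Sum.inl (v, false) : (V × Bool) ⊕ Cl)) '' B t ∪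
            (fun v => (Sum.inl (v, true) : (V × Bool) ⊕ Cl)) '' B t := by
          ext x
          constructor
          · rintro ⟨v, hv, b, rfl⟩
            cases b
            exacts [Or.inl ⟨v, hv, rfl⟩, Or.inr ⟨v, hv, rfl⟩]
          · rintro (⟨v, hv, rfl⟩ | ⟨v, hv, rfl⟩)
            exacts [⟨v, hv, false, rfl⟩, ⟨v, hv, true, rfl⟩]
        show ({x : (V × Bool) ⊕ Cl | ∃ v ∈ B t, ∃ b : Bool, x = Sum.inl (v, b)} ∪
          {Sum.inr neg1, Sum.inr neg2}).ncard ≤ 2 * k + 3 + 1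
        calc ({x : (V × Bool) ⊕ Cl | ∃ v ∈ B t, ∃ b : Bool, x = Sum.inl (v, b)} ∪
            {Sum.inr neg1, Sum.inr neg2}).ncard
            ≤ ({x : (V × Bool) ⊕ Cl | ∃ v ∈ B t, ∃ b : Bool, x = Sum.inl (v, b)}).ncard +
              ({Sum.inr neg1, Sum.inr neg2} : Set ((V × Bool) ⊕ Cl)).ncard :=
              Set.ncard_union_le _ _
          _ ≤ ((k + 1) + (k + 1)) + 2 := by
              gcongr
              · rw [himg]
                refine le_trans (Set.ncard_union_le _ _) ?_
                gcongr
                · exact le_trans (Set.ncard_image_le (Set.toFinite _)) (hbag t)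
                · exact le_trans (Set.ncard_image_le (Set.toFinite _)) (hbag t)
              · exact le_trans (Set.ncard_insert_le _ _) (by simp)
          _ ≤ 2 * k + 3 + 1 := by omega
      · have hk : 1 ≤ k := hk1 l.1.1 l.1.2 l.2
        show ({Sum.inl (l.1.1, false), Sum.inl (l.1.2, true), Sum.inr (Ce l),
          Sum.inr neg1, Sum.inr neg2} : Set ((V × Bool) ⊕ Cl)).ncard ≤ 2 * k + 3 + 1
        have e2 : ({Sum.inr neg1, Sum.inr neg2} : Set ((V × Bool) ⊕ Cl)).ncard ≤ 2 :=
          le_trans (Set.ncard_insert_le _ _) (by simp)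
        have e3 : ({Sum.inr (Ce l), Sum.inr neg1, Sum.inr neg2} :
            Set ((V × Bool) ⊕ Cl)).ncard ≤ 3 :=
          le_trans (Set.ncard_insert_le _ _) (by omega)
        have e4 : ({Sum.inl (l.1.2, true), Sum.inr (Ce l), Sum.inr neg1, Sum.inr neg2} :
            Set ((V × Bool) ⊕ Cl)).ncard ≤ 4 :=
          le_trans (Set.ncard_insert_le _ _) (by omega)
        have h5 : ({Sum.inl (l.1.1, false), Sum.inl (l.1.2, true), Sum.inr (Ce l),
            Sum.inr neg1, Sum.inr neg2} : Set ((V × Bool) ⊕ Cl)).ncard ≤ 5 :=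
          le_trans (Set.ncard_insert_le _ _) (by omega)
        omega
  exact Nat.sInf_le hmem
end

section
/- For every n ≥ 2, let H_n be the spanning subgraph of the n×n grid graph G_n consisting of all horizontal edges {(i,j),(i,j+1)}. Then the incidence graph of the CNF ψ(H_n) has pathwidth at most 7. -/
/-! ### Auxiliary material for stmt14 -/

namespace Stmt14

abbrev GW (n : ℕ) := (Fin n × Fin n) × Bool

abbrev GV (n : ℕ) := GW n ⊕ {C : Clause (GW n) // C ∈ psiCNF (gridHoriz n)}

/-- The bag at row `r`, column `c` (both as naturals). -/
def bagAt (n r c : ℕ) : Set (GV n) :=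
  {v | match v with
    | Sum.inl x => (x.1.1 : ℕ) = r ∧ ((x.1.2 : ℕ) = c ∨ (x.1.2 : ℕ) = c + 1)
    | Sum.inr C => (∃ l ∈ C.1, l.2 = false) ∨
        ((∃ l ∈ C.1, (l.1.1.1 : ℕ) = r ∧ (l.1.1.2 : ℕ) = c) ∧
         (∃ l ∈ C.1, (l.1.1.1 : ℕ) = r ∧ (l.1.1.2 : ℕ) = c + 1))}

lemma mem_bag_inl {n r c : ℕ} {x : GW n} :
    Sum.inl x ∈ bagAt n r c ↔
      (x.1.1 : ℕ) = r ∧ ((x.1.2 : ℕ) = c ∨ (x.1.2 : ℕ) = c + 1) := Iff.rfl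

lemma mem_bag_inr {n r c : ℕ} {C : {C : Clause (GW n) // C ∈ psiCNF (gridHoriz n)}} :
    Sum.inr C ∈ bagAt n r c ↔ (∃ l ∈ C.1, l.2 = false) ∨
      ((∃ l ∈ C.1, (l.1.1.1 : ℕ) = r ∧ (l.1.1.2 : ℕ) = c) ∧
       (∃ l ∈ C.1, (l.1.1.1 : ℕ) = r ∧ (l.1.1.2 : ℕ) = c + 1)) := Iff.rfl

/-- Structure of the clauses of `psiCNF (gridHoriz n)`. -/
lemma psiCNF_cases {n : ℕ} {C : Clause (GW n)} (hC : C ∈ psiCNF (gridHoriz n)) :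
    (∃ p q : GW n, C = {(p, true), (q, true)} ∧ p.2 ≠ q.2 ∧
      p.1.1 = q.1.1 ∧ (p.1.2 : ℕ) + 1 = (q.1.2 : ℕ)) ∨
    C = {l | ∃ v : Fin n × Fin n, l = ((v, false), false)} ∨
    C = {l | ∃ v : Fin n × Fin n, l = ((v, true), false)} := by
  rcases hC with ⟨e, he, rfl⟩ | h
  · left
    induction e using Sym2.ind with
    | _ a b =>
      rw [SimpleGraph.mem_edgeSet] at he
      obtain ⟨hgrid, hne⟩ := he
      have hpair : {l | ∃ x ∈ s(a, b), l = (x, true)}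
          = ({(a, true), (b, true)} : Clause (GW n)) := by
        ext l
        simp only [Sym2.mem_iff, Set.mem_setOf_eq, Set.mem_insert_iff, Set.mem_singleton_iff]
        constructor
        · rintro ⟨x, hx | hx, rfl⟩ <;> subst hx <;> tauto
        · rintro (rfl | rfl)
          · exact ⟨a, Or.inl rfl, rfl⟩
          · exact ⟨b, Or.inr rfl, rfl⟩
      simp only [gridHoriz, SimpleGraph.fromRel_adj] at hgrid
      obtain ⟨hne1, hrel⟩ := hgrid
      rcases hrel with ⟨h1, h2⟩ | ⟨h1, h2⟩
      · exact ⟨a, b, hpair, hne, h1, h2⟩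
      · exact ⟨b, a, by rw [hpair, Set.pair_comm], hne.symm, h1, h2⟩
  · right; simpa using h

/-- Construct a bag index with prescribed row and column. -/
lemma mk_t {n : ℕ} (hn : 2 ≤ n) {r c : ℕ} (hr : r < n) (hc : c < n - 1) :
    ∃ t : Fin (n * (n - 1)), (t : ℕ) / (n - 1) = r ∧ (t : ℕ) % (n - 1) = c := by
  refine ⟨⟨c + r * (n - 1), ?_⟩, ?_, ?_⟩
  · calc c + r * (n - 1) < (n - 1) + r * (n - 1) := by omega
      _ = (r + 1) * (n - 1) := by ring
      _ ≤ n * (n - 1) := Nat.mul_le_mul_right _ (by omega)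
  · show (c + r * (n - 1)) / (n - 1) = r
    rw [Nat.add_mul_div_right _ _ (by omega : 0 < n - 1), Nat.div_eq_of_lt hc]
    omega
  · show (c + r * (n - 1)) % (n - 1) = c
    rw [Nat.add_mul_mod_self_right, Nat.mod_eq_of_lt hc]

/-- Every variable vertex is in some bag. -/
lemma var_bag {n : ℕ} (hn : 2 ≤ n) (x : GW n) :
    ∃ t : Fin (n * (n - 1)),
      Sum.inl x ∈ bagAt n ((t : ℕ) / (n - 1)) ((t : ℕ) % (n - 1)) := by
  by_cases hj : (x.1.2 : ℕ) < n - 1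
  · obtain ⟨t, h1, h2⟩ := mk_t hn x.1.1.isLt hj
    exact ⟨t, by rw [h1, h2]; exact ⟨rfl, Or.inl rfl⟩⟩
  · have hlt := x.1.2.isLt
    obtain ⟨t, h1, h2⟩ := mk_t hn x.1.1.isLt (show (x.1.2 : ℕ) - 1 < n - 1 by omega)
    exact ⟨t, by rw [h1, h2]; exact ⟨rfl, Or.inr (by omega)⟩⟩

/-- A non-all-negative clause sitting in a bag is an edge clause located at that bag. -/
lemma located {n : ℕ} (hn : 2 ≤ n) {C : {C : Clause (GW n) // C ∈ psiCNF (gridHoriz n)}}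
    (hneg : ¬ ∃ l ∈ C.1, l.2 = false) {r c : ℕ} (hbag : Sum.inr C ∈ bagAt n r c) :
    ∃ p q : GW n, C.1 = {(p, true), (q, true)} ∧ p.2 ≠ q.2 ∧
      p.1.1 = q.1.1 ∧ (p.1.2 : ℕ) + 1 = (q.1.2 : ℕ) ∧
      (p.1.1 : ℕ) = r ∧ (p.1.2 : ℕ) = c := by
  have hv : (0 : ℕ) < n := by omega
  rcases psiCNF_cases C.2 with ⟨p, q, hform, hpq, hrow, hcol⟩ | h | h
  · rcases (mem_bag_inr.mp hbag) with h | ⟨⟨l1, hl1, hl1r, hl1c⟩, ⟨l2, hl2, hl2r, hl2c⟩⟩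
    · exact absurd h hneg
    · rw [hform] at hl1 hl2
      simp only [Set.mem_insert_iff, Set.mem_singleton_iff] at hl1 hl2
      rcases hl1 with rfl | rfl
      · exact ⟨p, q, hform, hpq, hrow, hcol, hl1r, hl1c⟩
      · exfalso
        rcases hl2 with rfl | rfl <;> simp only at hl2r hl2c hl1r hl1c <;> omega
  · exfalso; exact hneg ⟨(((⟨0, hv⟩, ⟨0, hv⟩), false), false), by rw [h]; exact ⟨_, rfl⟩, rfl⟩
  · exfalso; exact hneg ⟨(((⟨0, hv⟩, ⟨0, hv⟩), true), false), by rw [h]; exact ⟨_, rfl⟩, rfl⟩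

/-- Every clause vertex is in some bag. -/
lemma clause_bag {n : ℕ} (hn : 2 ≤ n) (C : {C : Clause (GW n) // C ∈ psiCNF (gridHoriz n)}) :
    ∃ t : Fin (n * (n - 1)),
      Sum.inr C ∈ bagAt n ((t : ℕ) / (n - 1)) ((t : ℕ) % (n - 1)) := by
  have hv : (0 : ℕ) < n := by omega
  have hm : 0 < n * (n - 1) := Nat.mul_pos (by omega) (by omega)
  rcases psiCNF_cases C.2 with ⟨p, q, hform, hpq, hrow, hcol⟩ | h | h
  · have hq := q.1.2.isLt
    obtain ⟨t, h1, h2⟩ := mk_t hn p.1.1.isLt (show (p.1.2 : ℕ) < n - 1 by omega)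
    refine ⟨t, ?_⟩
    rw [h1, h2]
    refine Or.inr ⟨⟨(p, true), by rw [hform]; exact Set.mem_insert _ _, rfl, rfl⟩,
      ⟨(q, true), by rw [hform]; exact Set.mem_insert_of_mem _ rfl,
        congrArg Fin.val hrow.symm, hcol.symm⟩⟩
  · exact ⟨⟨0, hm⟩, Or.inl ⟨(((⟨0, hv⟩, ⟨0, hv⟩), false), false), by rw [h]; exact ⟨_, rfl⟩, rfl⟩⟩
  · exact ⟨⟨0, hm⟩, Or.inl ⟨(((⟨0, hv⟩, ⟨0, hv⟩), true), false), by rw [h]; exact ⟨_, rfl⟩, rfl⟩⟩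

/-- A bag containing a variable vertex has (near-)determined index. -/
lemma var_interval {n : ℕ} (x : GW n) (t : Fin (n * (n - 1)))
    (h : Sum.inl x ∈ bagAt n ((t : ℕ) / (n - 1)) ((t : ℕ) % (n - 1))) :
    (t : ℕ) = (x.1.1 : ℕ) * (n - 1) + (x.1.2 : ℕ) ∨
    (t : ℕ) + 1 = (x.1.1 : ℕ) * (n - 1) + (x.1.2 : ℕ) := by
  obtain ⟨hr, hc⟩ := mem_bag_inl.mp h
  have hdm : (x.1.1 : ℕ) * (n - 1) + (t : ℕ) % (n - 1) = (t : ℕ) := by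
    rw [hr, Nat.mul_comm]; exact Nat.div_add_mod _ _
  generalize (x.1.1 : ℕ) * (n - 1) = A at hdm ⊢
  generalize (t : ℕ) % (n - 1) = M at hdm hc
  omega

/-- The predicate used to distinguish clauses sharing a bag. -/
def Pred (n r c : ℕ) (l : GW n × Bool) : Prop :=
  (l.2 = false ∧ l.1.2 = false) ∨
  (l.2 = true ∧ l.1.2 = true ∧ (l.1.1.1 : ℕ) = r ∧ (l.1.1.2 : ℕ) = c)

open Classical in
/-- A code with 8 possible values, injective on the bag at `(r, c)`. -/
noncomputable def code (n r c : ℕ) : GV n → Bool × Bool × Bool := fun v =>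
  match v with
  | Sum.inl x => (false, decide ((x.1.2 : ℕ) = c), x.2)
  | Sum.inr C => (true, decide (∃ l ∈ C.1, l.2 = false), decide (∃ l ∈ C.1, Pred n r c l))

lemma predC_iff {n : ℕ} {r c : ℕ} {C : {C : Clause (GW n) // C ∈ psiCNF (gridHoriz n)}}
    {p q : GW n} (hform : C.1 = {(p, true), (q, true)})
    (hcol : (p.1.2 : ℕ) + 1 = (q.1.2 : ℕ))
    (hr : (p.1.1 : ℕ) = r) (hc : (p.1.2 : ℕ) = c) :
    (∃ l ∈ C.1, Pred n r c l) ↔ p.2 = true := by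
  constructor
  · rintro ⟨l, hl, hPl⟩
    rw [hform] at hl
    simp only [Set.mem_insert_iff, Set.mem_singleton_iff] at hl
    rcases hl with rfl | rfl
    · rcases hPl with ⟨h1, -⟩ | ⟨-, h2, -, -⟩
      · exact absurd h1 (by simp)
      · exact h2
    · rcases hPl with ⟨h1, -⟩ | ⟨-, -, -, h4⟩
      · exact absurd h1 (by simp)
      · exfalso; simp only at h4; omega
  · intro hp2
    exact ⟨(p, true), by rw [hform]; exact Set.mem_insert _ _, Or.inr ⟨rfl, hp2, hr, hc⟩⟩

lemma code_injOn {n : ℕ} (hn : 2 ≤ n) (r c : ℕ) :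
    Set.InjOn (code n r c) (bagAt n r c) := by
  have hv : (0 : ℕ) < n := by omega
  rintro u hu v hv' huv
  rcases u with x | C <;> rcases v with y | D
  · obtain ⟨hr1, hc1⟩ := mem_bag_inl.mp hu
    obtain ⟨hr2, hc2⟩ := mem_bag_inl.mp hv'
    simp only [code, Prod.mk.injEq, decide_eq_decide] at huv
    obtain ⟨-, hiff, hb⟩ := huv
    have h1 : (x.1.1 : ℕ) = (y.1.1 : ℕ) := by omega
    have h2 : (x.1.2 : ℕ) = (y.1.2 : ℕ) := by
      by_cases hx : (x.1.2 : ℕ) = c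
      · have := hiff.mp hx; omega
      · have : ¬ (y.1.2 : ℕ) = c := fun h => hx (hiff.mpr h); omega
    have : x = y := Prod.ext (Prod.ext (Fin.ext h1) (Fin.ext h2)) hb
    rw [this]
  · exact absurd (congrArg Prod.fst huv) (by simp [code])
  · exact absurd (congrArg Prod.fst huv) (by simp [code])
  · simp only [code, Prod.mk.injEq, decide_eq_decide] at huv
    obtain ⟨-, hiff2, hiff3⟩ := huv
    by_cases hneg : ∃ l ∈ C.1, l.2 = false
    · have hnegD : ∃ l ∈ D.1, l.2 = false := hiff2.mp hneg
      -- both are all-negative clauses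
      have hCcase : C.1 = {l | ∃ v : Fin n × Fin n, l = ((v, false), false)} ∨
          C.1 = {l | ∃ v : Fin n × Fin n, l = ((v, true), false)} := by
        rcases psiCNF_cases C.2 with ⟨p, q, hform, -, -, -⟩ | h | h
        · exfalso
          obtain ⟨l, hl, hl2⟩ := hneg
          rw [hform] at hl
          simp only [Set.mem_insert_iff, Set.mem_singleton_iff] at hl
          rcases hl with rfl | rfl <;> simp at hl2
        · exact Or.inl h
        · exact Or.inr h
      have hDcase : D.1 = {l | ∃ v : Fin n × Fin n, l = ((v, false), false)} ∨
          D.1 = {l | ∃ v : Fin n × Fin n, l = ((v, true), false)} := by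
        rcases psiCNF_cases D.2 with ⟨p, q, hform, -, -, -⟩ | h | h
        · exfalso
          obtain ⟨l, hl, hl2⟩ := hnegD
          rw [hform] at hl
          simp only [Set.mem_insert_iff, Set.mem_singleton_iff] at hl
          rcases hl with rfl | rfl <;> simp at hl2
        · exact Or.inl h
        · exact Or.inr h
      have hP1 : ∀ (E : Clause (GW n)),
          E = {l | ∃ v : Fin n × Fin n, l = ((v, false), false)} →
          ∃ l ∈ E, Pred n r c l := by
        rintro E rfl
        exact ⟨(((⟨0, hv⟩, ⟨0, hv⟩), false), false), ⟨_, rfl⟩, Or.inl ⟨rfl, rfl⟩⟩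
      have hP2 : ∀ (E : Clause (GW n)),
          E = {l | ∃ v : Fin n × Fin n, l = ((v, true), false)} →
          ¬ ∃ l ∈ E, Pred n r c l := by
        rintro E rfl ⟨l, ⟨w, rfl⟩, hPl⟩
        rcases hPl with ⟨-, h2⟩ | ⟨h1, -⟩
        · simp at h2
        · simp at h1
      rcases hCcase with hC | hC <;> rcases hDcase with hD | hD
      · exact congrArg Sum.inr (Subtype.ext (hC.trans hD.symm))
      · exact absurd (hiff3.mp (hP1 _ hC)) (hP2 _ hD)
      · exact absurd (hiff3.mpr (hP1 _ hD)) (hP2 _ hC)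
      · exact congrArg Sum.inr (Subtype.ext (hC.trans hD.symm))
    · have hnegD : ¬ ∃ l ∈ D.1, l.2 = false := fun h => hneg (hiff2.mpr h)
      obtain ⟨p, q, hform, hpq, hrow, hcol, hr1, hc1⟩ := located hn hneg hu
      obtain ⟨p', q', hform', hpq', hrow', hcol', hr2, hc2⟩ := located hn hnegD hv'
      have hPp := predC_iff hform hcol hr1 hc1
      have hPp' := predC_iff hform' hcol' hr2 hc2
      have hp2 : p.2 = p'.2 := by
        have : p.2 = true ↔ p'.2 = true := (hPp.symm.trans hiff3).trans hPp'
        cases hb : p.2 <;> cases hb' : p'.2 <;> simp_all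
      have hp : p = p' := by
        refine Prod.ext (Prod.ext (Fin.ext ?_) (Fin.ext ?_)) hp2 <;> omega
      have hq : q = q' := by
        refine Prod.ext (Prod.ext (Fin.ext ?_) (Fin.ext ?_)) ?_
        · rw [← congrArg Fin.val hrow, ← congrArg Fin.val hrow']; omega
        · omega
        · have h1 : q.2 = !p.2 := by
            cases hb : p.2 <;> cases hb' : q.2 <;> simp_all
          have h2 : q'.2 = !p'.2 := by
            cases hb : p'.2 <;> cases hb' : q'.2 <;> simp_all
          rw [h1, h2, hp2]
      exact congrArg Sum.inr (Subtype.ext (by rw [hform, hform', hp, hq]))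

lemma bag_ncard {n : ℕ} (hn : 2 ≤ n) (r c : ℕ) : (bagAt n r c).ncard ≤ 8 := by
  rw [← Set.ncard_image_of_injOn (code_injOn hn r c)]
  have h1 : (code n r c '' bagAt n r c).ncard ≤ (Set.univ : Set (Bool × Bool × Bool)).ncard :=
    Set.ncard_le_ncard (Set.subset_univ _) Set.finite_univ
  simpa [Set.ncard_univ, Nat.card_eq_fintype_card] using h1

/-- Every incidence (variable, clause) pair shares a bag. -/
lemma cover_pair {n : ℕ} (hn : 2 ≤ n) (x : GW n)
    (C : {C : Clause (GW n) // C ∈ psiCNF (gridHoriz n)}) (bb : Bool) (hx : (x, bb) ∈ C.1) :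
    ∃ t : Fin (n * (n - 1)),
      Sum.inl x ∈ bagAt n ((t : ℕ) / (n - 1)) ((t : ℕ) % (n - 1)) ∧
      Sum.inr C ∈ bagAt n ((t : ℕ) / (n - 1)) ((t : ℕ) % (n - 1)) := by
  rcases psiCNF_cases C.2 with ⟨p, q, hform, hpq, hrow, hcol⟩ | h | h
  · have hq := q.1.2.isLt
    obtain ⟨t, h1, h2⟩ := mk_t hn p.1.1.isLt (show (p.1.2 : ℕ) < n - 1 by omega)
    refine ⟨t, ?_, ?_⟩ <;> rw [h1, h2]
    · rw [hform] at hx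
      simp only [Set.mem_insert_iff, Set.mem_singleton_iff, Prod.mk.injEq] at hx
      rcases hx with ⟨rfl, -⟩ | ⟨rfl, -⟩
      · exact ⟨rfl, Or.inl rfl⟩
      · exact ⟨congrArg Fin.val hrow.symm, Or.inr hcol.symm⟩
    · exact Or.inr ⟨⟨(p, true), by rw [hform]; exact Set.mem_insert _ _, rfl, rfl⟩,
        ⟨(q, true), by rw [hform]; exact Set.mem_insert_of_mem _ rfl,
          congrArg Fin.val hrow.symm, hcol.symm⟩⟩
  · obtain ⟨t, ht⟩ := var_bag hn x
    exact ⟨t, ht, Or.inl ⟨((x.1, false), false), by rw [h]; exact ⟨_, rfl⟩, rfl⟩⟩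
  · obtain ⟨t, ht⟩ := var_bag hn x
    exact ⟨t, ht, Or.inl ⟨((x.1, true), false), by rw [h]; exact ⟨_, rfl⟩, rfl⟩⟩

end Stmt14

/-- for `n ≥ 2`, the incidence graph of `ψ(H_n)`, where `H_n` is the
horizontal-edge spanning subgraph of the `n × n` grid, has pathwidth at most `7`. -/
theorem stmt14 (n : ℕ) (hn : 2 ≤ n) :
    pathwidth (incidenceGraph (psiCNF (gridHoriz n))) ≤ 7 := by
  open Stmt14 in
  refine Nat.sInf_le ?_
  refine ⟨n * (n - 1), fun t => bagAt n ((t : ℕ) / (n - 1)) ((t : ℕ) % (n - 1)),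
    ⟨?_, ?_⟩, fun t => bag_ncard hn _ _⟩
  · -- edge coverage
    intro e he
    induction e using Sym2.ind with
    | _ u v =>
      rw [SimpleGraph.mem_edgeSet] at he
      simp only [incidenceGraph, SimpleGraph.fromRel_adj] at he
      obtain ⟨hne, hrel⟩ := he
      have key : ∃ (x : GW n) (C : {C : Clause (GW n) // C ∈ psiCNF (gridHoriz n)}),
          (∃ bb, (x, bb) ∈ C.1) ∧
          ((u = Sum.inl x ∧ v = Sum.inr C) ∨ (u = Sum.inr C ∧ v = Sum.inl x)) := by
        rcases hrel with ⟨x, C, h1, h2, h3⟩ | ⟨x, C, h1, h2, h3⟩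
        · exact ⟨x, C, h3, Or.inl ⟨h1, h2⟩⟩
        · exact ⟨x, C, h3, Or.inr ⟨h2, h1⟩⟩
      obtain ⟨x, C, ⟨bb, hbb⟩, hcase⟩ := key
      obtain ⟨t, ht1, ht2⟩ := cover_pair hn x C bb hbb
      refine ⟨t, fun w hw => ?_⟩
      rw [Sym2.mem_iff] at hw
      rcases hcase with ⟨rfl, rfl⟩ | ⟨rfl, rfl⟩ <;> rcases hw with rfl | rfl <;> assumption
  · -- vertex coverage and interval property
    intro w
    constructor
    · rcases w with x | C
      · exact var_bag hn x
      · exact clause_bag hn C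
    · intro t1 t2 t3 h12 h23 hm1 hm3
      rcases w with x | C
      · have hv1 := var_interval x t1 hm1
        have hv3 := var_interval x t3 hm3
        rw [Fin.le_def] at h12 h23
        generalize (x.1.1 : ℕ) * (n - 1) = A at hv1 hv3
        have : (t2 : ℕ) = (t1 : ℕ) ∨ (t2 : ℕ) = (t3 : ℕ) := by omega
        rcases this with h | h
        · rw [Fin.ext h]; exact hm1
        · rw [Fin.ext h]; exact hm3
      · by_cases hneg : ∃ l ∈ C.1, l.2 = false
        · exact Or.inl hneg
        · obtain ⟨p, q, hform, hpq, hrow, hcol, hr1, hc1⟩ := located hn hneg hm1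
          obtain ⟨p', q', hform', hpq', hrow', hcol', hr3, hc3⟩ := located hn hneg hm3
          have hp : p = p' := by
            have hsets : ({(p, true), (q, true)} : Clause (GW n))
                = {(p', true), (q', true)} := hform.symm.trans hform'
            have h1 : ((p, true) : GW n × Bool) ∈
                ({(p', true), (q', true)} : Clause (GW n)) := by
              rw [← hsets]; exact Set.mem_insert _ _
            have h2 : ((p', true) : GW n × Bool) ∈
                ({(p, true), (q, true)} : Clause (GW n)) := by
              rw [hsets]; exact Set.mem_insert _ _
            simp only [Set.mem_insert_iff, Set.mem_singleton_iff, Prod.mk.injEq,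
              and_true] at h1 h2
            rcases h1 with h1 | h1
            · exact h1
            · exfalso
              rcases h2 with h2 | h2
              · rw [h1] at h2
                have := congrArg (fun z : GW n => (z.1.2 : ℕ)) h2
                omega
              · rw [h1] at hcol; rw [h2] at hcol'
                have e1 := congrArg (fun z : GW n => (z.1.2 : ℕ)) h1
                have e2 := congrArg (fun z : GW n => (z.1.2 : ℕ)) h2
                omega
          have ht13 : t1 = t3 := by
            have d1 := Nat.div_add_mod (t1 : ℕ) (n - 1)
            have d3 := Nat.div_add_mod (t3 : ℕ) (n - 1)
            refine Fin.ext ?_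
            rw [← d1, ← d3, hr1.symm.trans (hp ▸ hr3), hc1.symm.trans (hp ▸ hc3)]
          have : t2 = t1 := le_antisymm (ht13 ▸ h23) h12
          rw [this]; exact hm1
end
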